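/- Let X be a Banach space with a 1-unconditional basis (e_i). Suppose (w_k) and (v_k) are normalized sequences in X with ‖w_k − v_k‖ ≤ 16^{-k} for all k. Then for every choice of scalars (c_k) ⊆ [−1,1], writing w = Σ_k c_k w_k, v = Σ_k c_k v_k, and I = {i ∈ supp w : |w(i)| ≥ 2|v(i)|}, one has ‖Σ_{i∈I} w(i) e_i‖ ≤ 1/4. Consequently, if ‖w‖ = 1 then ‖Σ_{i ∈ supp w, |v(i)|/2 < |w(i)| < 2|v(i)|} w(i) e_i‖ ≥ 1/4. -/

import Mathlib

open scoped BigOperators Classical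
open Filter Topology

structure RSchauderBasis (X : Type*) [NormedAddCommGroup X] [NormedSpace ℝ X] where
  e : ℕ → X
  coord : ℕ → X →L[ℝ] ℝ
  ortho : ∀ i j, coord i (e j) = if i = j then 1 else 0
  expansion : ∀ x : X, HasSum (fun i => coord i x • e i) x

section Defs

variable {X : Type*} [NormedAddCommGroup X] [NormedSpace ℝ X]

def RSchauderBasis.IsUnconditionalWith (b : RSchauderBasis X) (C : ℝ) : Prop :=
  ∀ x y : X, (∀ i, |b.coord i y| ≤ |b.coord i x|) → ‖y‖ ≤ C * ‖x‖

def RSchauderBasis.supp (b : RSchauderBasis X) (x : X) : Set ℕ := {i | b.coord i x ≠ 0}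

def StrictlySingular {E F : Type*} [NormedAddCommGroup E] [NormedSpace ℝ E]
    [NormedAddCommGroup F] [NormedSpace ℝ F] (T : E →L[ℝ] F) : Prop :=
  ∀ Y : Submodule ℝ E, ¬ FiniteDimensional ℝ Y →
    ¬ ∃ c : ℝ, 0 < c ∧ ∀ y ∈ Y, c * ‖y‖ ≤ ‖T y‖

def RSchauderBasis.TightBySupport (b : RSchauderBasis X) : Prop :=
  ∀ Y Z : Submodule ℝ X, IsClosed (Y : Set X) → IsClosed (Z : Set X) →
    ¬ FiniteDimensional ℝ Y → ¬ FiniteDimensional ℝ Z →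
    (∀ y ∈ Y, ∀ z ∈ Z, ∀ i, b.coord i y ≠ 0 → b.coord i z = 0) →
    IsEmpty (Y ≃L[ℝ] Z)

def RSchauderBasis.IsBlockSequence (b : RSchauderBasis X) (x : ℕ → X) : Prop :=
  (∀ n, x n ≠ 0) ∧ (∀ n, (b.supp (x n)).Finite) ∧
    ∀ m n i j, m < n → b.coord i (x m) ≠ 0 → b.coord j (x n) ≠ 0 → i < j

def closedSpan (x : ℕ → X) : Submodule ℝ X :=
  (Submodule.span ℝ (Set.range x)).topologicalClosure

def RSchauderBasis.IsDiagonal (b : RSchauderBasis X) (D : X →L[ℝ] X) : Prop :=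
  ∀ i, ∃ lam : ℝ, D (b.e i) = lam • b.e i

def IsL1Average (b : RSchauderBasis X) (x : X) (n : ℕ) (c : ℝ) : Prop :=
  0 < n ∧ 1 ≤ c ∧ ∃ xs : Fin n → X,
    (∀ i, ‖xs i‖ ≤ 1) ∧
    (∀ i j : Fin n, i < j → ∀ p q, b.coord p (xs i) ≠ 0 → b.coord q (xs j) ≠ 0 → p < q) ∧
    x = (n : ℝ)⁻¹ • ∑ i, xs i ∧ 1 / c ≤ ‖x‖

end Defs

/-- if (w_k), (v_k) are normalized with ‖w_k − v_k‖ ≤ 16^{-k}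
(indices starting at 1) then for coefficients in [−1,1] the part of
w = Σ c_k w_k supported where |w(i)| ≥ 2|v(i)| has norm ≤ 1/4, and if ‖w‖ = 1
the part supported where |v(i)|/2 < |w(i)| < 2|v(i)| has norm ≥ 1/4. -/
theorem stmt8 {X : Type*} [NormedAddCommGroup X] [NormedSpace ℝ X] [CompleteSpace X]
    (b : RSchauderBasis X) (hb : b.IsUnconditionalWith 1)
    (wseq vseq : ℕ → X) (hwn : ∀ k, ‖wseq k‖ = 1) (hvn : ∀ k, ‖vseq k‖ = 1)
    (hclose : ∀ k, ‖wseq k - vseq k‖ ≤ (1 / 16 : ℝ) ^ (k + 1))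
    (c : ℕ → ℝ) (hc : ∀ k, |c k| ≤ 1)
    (w v : X) (hws : HasSum (fun k => c k • wseq k) w)
    (hvs : HasSum (fun k => c k • vseq k) v) :
    (∀ u : X, (∀ i, b.coord i u =
        if b.coord i w ≠ 0 ∧ 2 * |b.coord i v| ≤ |b.coord i w|
        then b.coord i w else 0) → ‖u‖ ≤ 1 / 4)
    ∧ (‖w‖ = 1 → ∀ u : X, (∀ i, b.coord i u =
        if b.coord i w ≠ 0 ∧ |b.coord i v| / 2 < |b.coord i w| ∧
            |b.coord i w| < 2 * |b.coord i v|
        then b.coord i w else 0) → 1 / 4 ≤ ‖u‖) := by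
  have hd : HasSum (fun k => c k • (wseq k - vseq k)) (w - v) := by
    simpa [smul_sub] using hws.sub hvs
  have hg : HasSum (fun k : ℕ => (1 / 16 : ℝ) ^ (k + 1)) (1 / 15) := by
    have h0 : HasSum (fun k : ℕ => (1 / 16 : ℝ) ^ k) (1 - 1 / 16)⁻¹ :=
      hasSum_geometric_of_lt_one (by norm_num) (by norm_num)
    have h1 := h0.mul_left (1 / 16 : ℝ)
    have he : (fun k : ℕ => (1 / 16 : ℝ) ^ (k + 1)) = fun k => 1 / 16 * (1 / 16) ^ k := by
      funext k; ring
    rw [he, show (1 / 16 : ℝ) * (1 - 1 / 16)⁻¹ = 1 / 15 by norm_num] at *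
    exact h1
  have hbound : ∀ k, ‖c k • (wseq k - vseq k)‖ ≤ (1 / 16 : ℝ) ^ (k + 1) := by
    intro k
    rw [norm_smul]
    calc ‖c k‖ * ‖wseq k - vseq k‖ ≤ 1 * (1 / 16 : ℝ) ^ (k + 1) := by
          apply mul_le_mul (by simpa [Real.norm_eq_abs] using hc k) (hclose k)
            (norm_nonneg _) zero_le_one
      _ = _ := one_mul _
  have hsummable : Summable (fun k => ‖c k • (wseq k - vseq k)‖) :=
    Summable.of_nonneg_of_le (fun k => norm_nonneg _) hbound hg.summable
  have hwv : ‖w - v‖ ≤ 1 / 15 := by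
    calc ‖w - v‖ ≤ ∑' k, ‖c k • (wseq k - vseq k)‖ := by
          rw [← hd.tsum_eq]; exact norm_tsum_le_tsum_norm hsummable
      _ ≤ 1 / 15 := by
          rw [← hg.tsum_eq]
          exact Summable.tsum_le_tsum hbound hsummable hg.summable
  have key : ∀ u : X, (∀ i, |b.coord i u| ≤ |2 * (b.coord i w - b.coord i v)|) →
      ‖u‖ ≤ 2 / 15 := by
    intro u hu
    have hcomp : ∀ i, |b.coord i u| ≤ |b.coord i ((2 : ℝ) • (w - v))| := by
      intro i
      have : b.coord i ((2 : ℝ) • (w - v)) = 2 * (b.coord i w - b.coord i v) := by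
        simp [map_sub, smul_eq_mul]
      rw [this]
      exact hu i
    have h := hb ((2 : ℝ) • (w - v)) u hcomp
    have hn : ‖(2 : ℝ) • (w - v)‖ = 2 * ‖w - v‖ := by
      rw [norm_smul]; norm_num
    rw [one_mul, hn] at h
    linarith
  constructor
  · intro u hu
    have h1 : ‖u‖ ≤ 2 / 15 := by
      apply key
      intro i
      rw [hu i]
      have habs := abs_sub_abs_le_abs_sub (b.coord i w) (b.coord i v)
      rw [abs_mul]
      split_ifs with h
      · obtain ⟨_, h2⟩ := h
        have : |(2 : ℝ)| = 2 := by norm_num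
        rw [this]
        linarith
      · simp [abs_nonneg, mul_nonneg]
    linarith
  · intro hw1 u hu
    have h2 : ‖w - u‖ ≤ 2 / 15 := by
      apply key
      intro i
      rw [map_sub, hu i]
      have habs := abs_sub_abs_le_abs_sub (b.coord i w) (b.coord i v)
      have habs' := abs_sub_abs_le_abs_sub (b.coord i v) (b.coord i w)
      rw [abs_sub_comm (b.coord i v) (b.coord i w)] at habs'
      have h2abs : |(2 : ℝ) * (b.coord i w - b.coord i v)| =
          2 * |b.coord i w - b.coord i v| := by
        rw [abs_mul]; norm_num
      rw [h2abs]
      split_ifs with h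
      · simp only [sub_self, abs_zero]
        positivity
      · rw [sub_zero]
        by_cases hw0 : b.coord i w = 0
        · rw [hw0, abs_zero]
          positivity
        · have hmid : ¬(|b.coord i v| / 2 < |b.coord i w| ∧
              |b.coord i w| < 2 * |b.coord i v|) := fun hm => h ⟨hw0, hm⟩
          rcases not_and_or.mp hmid with hle | hge
          · push_neg at hle
            have hnn := abs_nonneg (b.coord i w - b.coord i v)
            linarith
          · push_neg at hge
            have hnn := abs_nonneg (b.coord i w - b.coord i v)
            linarith
    have h3 := norm_sub_norm_le w u
    rw [hw1] at h3
    linarith
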